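/- Let G = ([n],[B],E) be a left-d_L-regular (K,ε)-lossless bipartite expander. For X ⊆ [n] with |X| ≤ K and i ∈ X, let u_i = |{b ∈ U(X) : (i,b) ∈ E}| denote the number of unique neighbors of the vertex i. Then |{i ∈ X : u_i ≥ 1}| ≥ (1 − 2ε)·|X|, i.e., at least a (1 − 2ε)-fraction of the vertices of X have at least one unique neighbor. -/

import Mathlib

open Finset

/-- The neighborhood `N(X)` of a set `X` of left vertices in the bipartite graph with
edge set `E ⊆ [n] × [B]`. -/
def nbhd {n B : ℕ} (E : Finset (Fin n × Fin B)) (X : Finset (Fin n)) : Finset (Fin B) :=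
  Finset.univ.filter (fun b : Fin B => ∃ i ∈ X, (i, b) ∈ E)

/-- `u_b(X)`: the number of neighbors of the right vertex `b` inside `X`. -/
def multb {n B : ℕ} (E : Finset (Fin n × Fin B)) (X : Finset (Fin n)) (b : Fin B) : ℕ :=
  (X.filter (fun i => (i, b) ∈ E)).card

/-- `U(X)`: the set of unique neighbors of `X`, i.e. right vertices with exactly one
neighbor in `X`. -/
def uniqNbrs {n B : ℕ} (E : Finset (Fin n × Fin B)) (X : Finset (Fin n)) : Finset (Fin B) :=
  Finset.univ.filter (fun b : Fin B => multb E X b = 1)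

/-- The graph is left-`dL`-regular: every left vertex has exactly `dL` neighbors. -/
def LeftRegular {n B : ℕ} (E : Finset (Fin n × Fin B)) (dL : ℕ) : Prop :=
  ∀ i : Fin n, (Finset.univ.filter (fun b : Fin B => (i, b) ∈ E)).card = dL

/-- The graph is a `(K, ε)`-lossless expander: every `X` with `|X| ≤ K` satisfies
`|N(X)| ≥ (1 - ε) · dL · |X|`. -/
def Lossless {n B : ℕ} (E : Finset (Fin n × Fin B)) (dL K : ℕ) (ε : ℝ) : Prop :=
  ∀ X : Finset (Fin n), X.card ≤ K → ((nbhd E X).card : ℝ) ≥ (1 - ε) * dL * X.card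


/-- `u_i`: the number of unique neighbors (buckets in `U(X)`) adjacent to the left vertex `i`. -/
def uVert {n B : ℕ} (E : Finset (Fin n × Fin B)) (X : Finset (Fin n)) (i : Fin n) : ℕ :=
  ((uniqNbrs E X).filter (fun b => (i, b) ∈ E)).card

/-- In a left-`dL`-regular `(K,ε)`-lossless bipartite expander, for every
`X ⊆ [n]` with `|X| ≤ K`, at least a `(1 − 2ε)`-fraction of the vertices of `X` have at
least one unique neighbor. -/
theorem many_vertices_with_unique_neighbor (n B dL K : ℕ) (ε : ℝ)
    (hdL : 0 < dL) (hK : 0 < K) (hε0 : 0 < ε) (hε1 : ε < 1)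
    (E : Finset (Fin n × Fin B))
    (hreg : LeftRegular E dL) (hexp : Lossless E dL K ε) :
    ∀ X : Finset (Fin n), X.card ≤ K →
      (((X.filter (fun i => 1 ≤ uVert E X i)).card : ℝ)) ≥ (1 - 2 * ε) * X.card := by
  intro X hX
  -- total number of edges from X
  have hA : ∑ b : Fin B, multb E X b = dL * X.card := by
    simp only [multb, Finset.card_filter]
    rw [Finset.sum_comm]
    have : ∀ i ∈ X, (∑ b : Fin B, if (i, b) ∈ E then 1 else 0) = dL := by
      intro i _
      rw [← Finset.card_filter]
      exact hreg i
    rw [Finset.sum_congr rfl this, Finset.sum_const, smul_eq_mul, mul_comm]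
  -- U ⊆ N
  have hUN : uniqNbrs E X ⊆ nbhd E X := by
    intro b hb
    simp only [uniqNbrs, Finset.mem_filter] at hb
    have := hb.2
    simp only [nbhd, Finset.mem_filter, Finset.mem_univ, true_and]
    have hcard : 0 < (X.filter (fun i => (i, b) ∈ E)).card := by
      rw [show (X.filter (fun i => (i, b) ∈ E)).card = 1 from this]; norm_num
    obtain ⟨i, hi⟩ := Finset.card_pos.mp hcard
    simp only [Finset.mem_filter] at hi
    exact ⟨i, hi.1, hi.2⟩
  -- multb = 0 off nbhd
  have hoff : ∀ b ∉ nbhd E X, multb E X b = 0 := by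
    intro b hb
    simp only [nbhd, Finset.mem_filter, Finset.mem_univ, true_and] at hb
    push_neg at hb
    simp only [multb, Finset.card_eq_zero]
    exact Finset.filter_eq_empty_iff.mpr hb
  -- key bound: dL * |X| + |U| ≥ 2 |N|
  have hB : dL * X.card + (uniqNbrs E X).card ≥ 2 * (nbhd E X).card := by
    have h1 : ∑ b : Fin B, multb E X b = ∑ b ∈ nbhd E X, multb E X b := by
      rw [← Finset.sum_subset (Finset.subset_univ (nbhd E X))]
      intro b _ hb; exact hoff b hb
    have h3 : ∑ b ∈ uniqNbrs E X, multb E X b = (uniqNbrs E X).card := by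
      rw [Finset.card_eq_sum_ones]
      apply Finset.sum_congr rfl
      intro b hb
      simp only [uniqNbrs, Finset.mem_filter] at hb
      exact hb.2
    have h4 : 2 * (nbhd E X \ uniqNbrs E X).card ≤
        ∑ b ∈ nbhd E X \ uniqNbrs E X, multb E X b := by
      calc 2 * (nbhd E X \ uniqNbrs E X).card
            = ∑ _b ∈ nbhd E X \ uniqNbrs E X, 2 := by
              rw [Finset.sum_const, smul_eq_mul, mul_comm]
        _ ≤ _ := by
              apply Finset.sum_le_sum
              intro b hb
              simp only [Finset.mem_sdiff, uniqNbrs, Finset.mem_filter, Finset.mem_univ,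
                true_and] at hb
              obtain ⟨hbN, hb1⟩ := hb
              simp only [nbhd, Finset.mem_filter, Finset.mem_univ, true_and] at hbN
              obtain ⟨i, hiX, hiE⟩ := hbN
              have hpos : 0 < multb E X b :=
                Finset.card_pos.mpr ⟨i, Finset.mem_filter.mpr ⟨hiX, hiE⟩⟩
              omega
    have h5 : ∑ b ∈ nbhd E X, multb E X b =
        ∑ b ∈ nbhd E X \ uniqNbrs E X, multb E X b + ∑ b ∈ uniqNbrs E X, multb E X b :=
      (Finset.sum_sdiff hUN).symm
    have hsd : (nbhd E X \ uniqNbrs E X).card = (nbhd E X).card - (uniqNbrs E X).card :=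
      Finset.card_sdiff_of_subset hUN
    have hle := Finset.card_le_card hUN
    omega
  -- sum of uVert over X equals |U|
  have hD : ∑ i ∈ X, uVert E X i = (uniqNbrs E X).card := by
    simp only [uVert, Finset.card_filter]
    rw [Finset.sum_comm]
    have hone : ∀ b ∈ uniqNbrs E X, (∑ i ∈ X, if (i, b) ∈ E then 1 else 0) = 1 := by
      intro b hb
      simp only [uniqNbrs, Finset.mem_filter, Finset.mem_univ, true_and] at hb
      rw [← Finset.card_filter]
      exact hb
    rw [Finset.sum_congr rfl hone, Finset.sum_const, smul_eq_mul, mul_one]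
  -- uVert ≤ dL
  have huv : ∀ i : Fin n, uVert E X i ≤ dL := by
    intro i
    rw [← hreg i]
    apply Finset.card_le_card
    intro b hb
    simp only [uVert, uniqNbrs, Finset.mem_filter, Finset.mem_univ, true_and] at hb ⊢
    exact hb.2
  -- hE : |U| ≤ dL * filter.card
  have hE : (uniqNbrs E X).card ≤ dL * (X.filter (fun i => 1 ≤ uVert E X i)).card := by
    rw [← hD]
    calc ∑ i ∈ X, uVert E X i
        = ∑ i ∈ X.filter (fun i => 1 ≤ uVert E X i), uVert E X i := by
          rw [Finset.sum_filter_of_ne]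
          intro i _ h
          omega
      _ ≤ ∑ i ∈ X.filter (fun i => 1 ≤ uVert E X i), dL := by
          gcongr with i hi
          exact huv i
      _ = (X.filter (fun i => 1 ≤ uVert E X i)).card * dL := by
          rw [Finset.sum_const, smul_eq_mul]
      _ = dL * (X.filter (fun i => 1 ≤ uVert E X i)).card := mul_comm _ _
  have hN := hexp X hX
  -- combine over ℝ
  have hBr : (dL : ℝ) * X.card + (uniqNbrs E X).card ≥ 2 * (nbhd E X).card := by
    exact_mod_cast hB
  have hEr : ((uniqNbrs E X).card : ℝ) ≤ dL * (X.filter (fun i => 1 ≤ uVert E X i)).card := by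
    exact_mod_cast hE
  have hdLr : (0:ℝ) < dL := by exact_mod_cast hdL
  rw [ge_iff_le, ← mul_le_mul_iff_right₀ hdLr]
  nlinarith [hN, hBr, hEr]
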